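/- Let n ≥ 1 and let f ∈ ℂ[[z_1,…,z_n]] be a formal power series of order m ≥ 2 in which the monomial z_1^m occurs with nonzero coefficient. Let φ_1,…,φ_n ∈ ℂ[[t]] have zero constant term, and define F(t,s) := f(φ_1(t) + s·t, φ_2(t), …, φ_n(t)) ∈ ℂ[[t,s]]. Then t^m divides F in ℂ[[t,s]], and the coefficient of the monomial t^m s^m in F is nonzero (it equals the coefficient of z_1^m in f); in particular t^{m+1} does not divide F. -/

import Mathlib

/-- `ℂ[[t,s]]`, viewed as power series in `t` whose coefficients are
power series in `s`. -/
abbrev CTS : Type := PowerSeries (PowerSeries ℂ)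

/-- Substitution of power series `g j ∈ S[[t]]` (each of which is assumed,
for this definition to be the true substitution, to have zero constant
term in `t`) into `f ∈ ℂ[[z_0,…,z_n]]`, defined coefficientwise:
the coefficient of `t^k` in `f(g)` is the (finite) sum, over the
multi-exponents `d` with `d j ≤ k` for all `j`, of
`(coeff d f) • coeff_k (∏ j, (g j)^(d j))`.  (Exponents `d` of total degree
`> k` contribute `0` since each `g j` is divisible by `t`.) -/
noncomputable def substArc {n : ℕ} {S : Type} [CommRing S] [Algebra ℂ S]
    (g : Fin (n + 1) → PowerSeries S) (f : MvPowerSeries (Fin (n + 1)) ℂ) :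
    PowerSeries S :=
  PowerSeries.mk fun k =>
    ∑ d ∈ Finset.Iic (Finsupp.equivFunOnFinite.symm fun _ : Fin (n + 1) => k),
      MvPowerSeries.coeff (R := ℂ) d f • PowerSeries.coeff (R := S) k (∏ j, g j ^ d j)

/-- The image of `φ(t) ∈ ℂ[[t]]` in `ℂ[[t,s]]`. -/
noncomputable def embT (φ : PowerSeries ℂ) : CTS :=
  PowerSeries.map (PowerSeries.C (R := ℂ)) φ

/-- The variable `s` as an element of `ℂ[[t,s]]`. -/
noncomputable def sVar : CTS := PowerSeries.C (R := (PowerSeries ℂ)) PowerSeries.X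

/-- The substitution `F(t,s) = f(φ_0(t) + w, φ_1(t), …, φ_n(t)) ∈ ℂ[[t,s]]`,
where `w ∈ ℂ[[t,s]]` is the perturbation added to the first coordinate. -/
noncomputable def deformSubst {n : ℕ} (φ : Fin (n + 1) → PowerSeries ℂ)
    (w : CTS) (f : MvPowerSeries (Fin (n + 1)) ℂ) : CTS :=
  substArc (fun j => if j = 0 then embT (φ 0) + w else embT (φ j)) f

lemma auxProd {S : Type} [CommRing S] {N : ℕ} (g : Fin N → PowerSeries S)
    (hg : ∀ j, PowerSeries.constantCoeff (R := S) (g j) = 0) (d : Fin N →₀ ℕ) :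
    (∀ k, k < ∑ j, d j → PowerSeries.coeff (R := S) k (∏ j, g j ^ d j) = 0) ∧
    PowerSeries.coeff (R := S) (∑ j, d j) (∏ j, g j ^ d j)
      = ∏ j, (PowerSeries.coeff (R := S) 1 (g j)) ^ d j := by
  choose h hh using fun j => (PowerSeries.X_dvd_iff.mpr (hg j))
  have hprod : ∏ j, g j ^ d j
      = PowerSeries.X ^ (∑ j, d j) * ∏ j, h j ^ d j := by
    calc ∏ j, g j ^ d j = ∏ j, (PowerSeries.X ^ d j * h j ^ d j) :=
          Finset.prod_congr rfl fun j _ => by rw [hh j, mul_pow]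
      _ = (∏ j, (PowerSeries.X : PowerSeries S) ^ d j) * ∏ j, h j ^ d j :=
          Finset.prod_mul_distrib
      _ = PowerSeries.X ^ (∑ j, d j) * ∏ j, h j ^ d j := by
          rw [Finset.prod_pow_eq_pow_sum]
  constructor
  · intro k hk
    rw [hprod, PowerSeries.coeff_X_pow_mul', if_neg (not_le.mpr hk)]
  · rw [hprod, PowerSeries.coeff_X_pow_mul', if_pos le_rfl, Nat.sub_self,
      PowerSeries.coeff_zero_eq_constantCoeff, map_prod]
    refine Finset.prod_congr rfl fun j _ => ?_
    rw [map_pow, hh j, PowerSeries.coeff_succ_X_mul,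
      PowerSeries.coeff_zero_eq_constantCoeff]

lemma auxPow (a : ℂ) {k m : ℕ} (hk : k ≤ m) :
    PowerSeries.coeff (R := ℂ) m ((PowerSeries.C (R := ℂ) a + PowerSeries.X) ^ k)
      = if k = m then 1 else 0 := by
  rw [add_pow, map_sum]
  have key : ∀ i ∈ Finset.range (k + 1),
      PowerSeries.coeff (R := ℂ) m
        ((PowerSeries.C (R := ℂ) a) ^ i * PowerSeries.X ^ (k - i) * (k.choose i : PowerSeries ℂ))
        = if i = 0 ∧ k = m then 1 else 0 := by
    intro i hi
    have hik : i ≤ k := Nat.lt_succ_iff.mp (Finset.mem_range.mp hi)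
    rw [← map_pow, ← map_natCast (PowerSeries.C (R := ℂ)) (k.choose i), mul_comm, ← mul_assoc,
      ← map_mul, PowerSeries.coeff_C_mul, PowerSeries.coeff_X_pow]
    rcases eq_or_ne k m with rfl | hne
    · rcases eq_or_ne i 0 with rfl | hi0
      · simp
      · have : ¬ (k = k - i) := by omega
        simp [this, hi0]
    · have : ¬ (m = k - i) := by omega
      simp [this, hne]
  rw [Finset.sum_congr rfl key]
  rcases eq_or_ne k m with rfl | hne
  · simp [Finset.sum_ite_eq']
  · simp [hne]

/-- Let `f ∈ ℂ[[z_0,…,z_n]]` have order `m ≥ 2`, with `z_0^m` occurring with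
nonzero coefficient, and let `φ_0,…,φ_n ∈ ℂ[[t]]` have zero constant term.
Set `F(t,s) := f(φ_0(t) + s·t, φ_1(t), …, φ_n(t))`.  Then `t^m ∣ F`, the
coefficient of `t^m s^m` in `F` equals the coefficient of `z_0^m` in `f`
and is nonzero, and `t^(m+1) ∤ F`. -/
theorem stmt4 (n : ℕ) (f : MvPowerSeries (Fin (n + 1)) ℂ) (m : ℕ) (hm : 2 ≤ m)
    (hord : ∀ d : Fin (n + 1) →₀ ℕ,
      (d.sum fun _ e => e) < m → MvPowerSeries.coeff (R := ℂ) d f = 0)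
    (hz : MvPowerSeries.coeff (R := ℂ) (Finsupp.single 0 m) f ≠ 0)
    (φ : Fin (n + 1) → PowerSeries ℂ)
    (hφ : ∀ j, PowerSeries.constantCoeff (R := ℂ) (φ j) = 0) :
    (PowerSeries.X : CTS) ^ m ∣ deformSubst φ (sVar * PowerSeries.X) f ∧
    PowerSeries.coeff (R := ℂ) m
        (PowerSeries.coeff (R := (PowerSeries ℂ)) m (deformSubst φ (sVar * PowerSeries.X) f))
      = MvPowerSeries.coeff (R := ℂ) (Finsupp.single 0 m) f ∧
    PowerSeries.coeff (R := ℂ) m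
        (PowerSeries.coeff (R := (PowerSeries ℂ)) m (deformSubst φ (sVar * PowerSeries.X) f)) ≠ 0 ∧
    ¬ (PowerSeries.X : CTS) ^ (m + 1) ∣ deformSubst φ (sVar * PowerSeries.X) f := by
  classical
  set g : Fin (n + 1) → CTS :=
    fun j => if j = 0 then embT (φ 0) + sVar * PowerSeries.X else embT (φ j) with hgdef
  have hFg : deformSubst φ (sVar * PowerSeries.X) f = substArc g f := rfl
  -- constant coefficients of the g j vanish
  have hg : ∀ j, PowerSeries.constantCoeff (R := (PowerSeries ℂ)) (g j) = 0 := by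
    intro j
    have hemb : ∀ i, PowerSeries.constantCoeff (R := (PowerSeries ℂ)) (embT (φ i)) = 0 := by
      intro i
      rw [embT, ← PowerSeries.coeff_zero_eq_constantCoeff, PowerSeries.coeff_map,
        PowerSeries.coeff_zero_eq_constantCoeff, hφ i, map_zero]
    rcases eq_or_ne j 0 with rfl | hj
    · simp only [hgdef, if_pos rfl, map_add, hemb 0, map_mul, sVar,
        PowerSeries.constantCoeff_C, PowerSeries.constantCoeff_X, mul_zero, add_zero]
    · simp only [hgdef, if_neg hj, hemb j]
  -- coefficient of t^1 in each g j
  have hc0 : PowerSeries.coeff (R := (PowerSeries ℂ)) 1 (g 0)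
      = PowerSeries.C (R := ℂ) (PowerSeries.coeff (R := ℂ) 1 (φ 0)) + PowerSeries.X := by
    simp only [hgdef, if_pos rfl, map_add, embT, PowerSeries.coeff_map, sVar]
    congr 1
    rw [PowerSeries.coeff_C_mul, PowerSeries.coeff_one_X, mul_one]
  have hcj : ∀ j : Fin (n + 1), j ≠ 0 → PowerSeries.coeff (R := (PowerSeries ℂ)) 1 (g j)
      = PowerSeries.C (R := ℂ) (PowerSeries.coeff (R := ℂ) 1 (φ j)) := by
    intro j hj
    simp only [hgdef, if_neg hj, embT, PowerSeries.coeff_map]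
  have hsum : ∀ d : Fin (n + 1) →₀ ℕ, (d.sum fun _ e => e) = ∑ j, d j := by
    intro d; exact Finsupp.sum_fintype _ _ fun _ => rfl
  -- coefficients of t^k in F vanish for k < m
  have hlow : ∀ k, k < m →
      PowerSeries.coeff (R := (PowerSeries ℂ)) k (substArc g f) = 0 := by
    intro k hk
    rw [substArc, PowerSeries.coeff_mk]
    refine Finset.sum_eq_zero fun d _ => ?_
    rcases le_or_gt (∑ j, d j) k with hle | hlt
    · rw [hord d (by rw [hsum]; omega), zero_smul]
    · rw [(auxProd g hg d).1 k hlt, smul_zero]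
  have hdvd : (PowerSeries.X : CTS) ^ m ∣ deformSubst φ (sVar * PowerSeries.X) f := by
    rw [hFg, PowerSeries.X_pow_dvd_iff]; exact hlow
  -- the main coefficient computation
  have hmain : PowerSeries.coeff (R := ℂ) m
      (PowerSeries.coeff (R := (PowerSeries ℂ)) m (deformSubst φ (sVar * PowerSeries.X) f))
      = MvPowerSeries.coeff (R := ℂ) (Finsupp.single 0 m) f := by
    rw [hFg, substArc, PowerSeries.coeff_mk, map_sum]
    have hterm : ∀ d ∈ Finset.Iic (Finsupp.equivFunOnFinite.symm fun _ : Fin (n + 1) => m),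
        d ≠ Finsupp.single 0 m →
        PowerSeries.coeff (R := ℂ) m (MvPowerSeries.coeff (R := ℂ) d f •
          PowerSeries.coeff (R := (PowerSeries ℂ)) m (∏ j, g j ^ d j)) = 0 := by
      intro d hd hne
      rcases lt_trichotomy (∑ j, d j) m with hlt | heq | hgt
      · rw [hord d (by rw [hsum]; omega), zero_smul, map_zero]
      · -- total degree exactly m but d ≠ single 0 m
        have hle : d 0 ≤ m := heq ▸ Finset.single_le_sum
          (f := fun j => d j) (fun _ _ => Nat.zero_le _) (Finset.mem_univ 0)
        have hd0 : d 0 < m := by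
          rcases lt_or_eq_of_le hle with h | h
          · exact h
          · exfalso; apply hne; ext j
            have hsplit : ∑ j, d j = d 0 + ∑ j ∈ Finset.univ.erase 0, d j :=
              (Finset.add_sum_erase _ _ (Finset.mem_univ 0)).symm
            have hz' : ∑ j ∈ Finset.univ.erase 0, d j = 0 := by omega
            rcases eq_or_ne j 0 with rfl | hj
            · simp [h]
            · have hdj : d j = 0 := Finset.sum_eq_zero_iff.mp hz' j
                (Finset.mem_erase.mpr ⟨hj, Finset.mem_univ j⟩)
              simp [Finsupp.single_apply, hj.symm, hdj]
        have htail : ∏ i : Fin n, (PowerSeries.coeff (R := (PowerSeries ℂ)) 1 (g i.succ)) ^ d i.succ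
            = PowerSeries.C (R := ℂ)
              (∏ i : Fin n, (PowerSeries.coeff (R := ℂ) 1 (φ i.succ)) ^ d i.succ) := by
          rw [map_prod]
          exact Finset.prod_congr rfl fun i _ => by
            rw [hcj i.succ (Fin.succ_ne_zero i), map_pow]
        have h2 := (auxProd g hg d).2
        rw [heq] at h2
        rw [h2, Fin.prod_univ_succ, htail, hc0, PowerSeries.coeff_smul,
          PowerSeries.coeff_mul_C, auxPow _ hd0.le, if_neg hd0.ne, zero_mul, smul_zero]
      · rw [(auxProd g hg d).1 m hgt, smul_zero, map_zero]
    have hmem : Finsupp.single (0 : Fin (n + 1)) m ∈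
        Finset.Iic (Finsupp.equivFunOnFinite.symm fun _ : Fin (n + 1) => m) := by
      rw [Finset.mem_Iic, Finsupp.le_def]
      intro j
      simp only [Finsupp.equivFunOnFinite_symm_apply_apply, Finsupp.single_apply]
      split <;> omega
    rw [Finset.sum_eq_single_of_mem _ hmem hterm]
    have hσ : ∑ j, (Finsupp.single (0 : Fin (n + 1)) m) j = m := by
      simp [Finsupp.single_apply]
    have h2 := (auxProd g hg (Finsupp.single 0 m)).2
    rw [hσ] at h2
    have h0 : (Finsupp.single (0 : Fin (n + 1)) m) 0 = m := by simp
    have htail : ∀ i : Fin n, (Finsupp.single (0 : Fin (n + 1)) m) i.succ = 0 := by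
      intro i; simp [Finsupp.single_apply, (Fin.succ_ne_zero i).symm]
    rw [h2, Fin.prod_univ_succ]
    simp only [h0, htail, pow_zero, Finset.prod_const_one, mul_one]
    rw [hc0, PowerSeries.coeff_smul, auxPow _ le_rfl, if_pos rfl, smul_eq_mul, mul_one]
  refine ⟨hdvd, hmain, by rw [hmain]; exact hz, ?_⟩
  intro hdvd'
  have := PowerSeries.X_pow_dvd_iff.mp (hFg ▸ hdvd') m (Nat.lt_succ_self m)
  rw [hFg, this, map_zero] at hmain
  exact hz hmain.symm
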